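/- arXiv:1511.03879 — 2 statements merged into one kernel-verified Lean document; each statement's English description precedes it below -/
import Mathlib

section
/- For all integers k ≥ 8 and x ≥ 1, the polynomial P_{B_k}(x) = x²(ε − 2 + ⌊k(k−3)/6⌋) − 2x(1 + ⌊k(k−3)/6⌋) + 4(1 + ⌊k(k−3)/6⌋) is strictly positive, with minimum value 20 attained at k = 8, x = 1, where ε ∈ {0, 2} equals 0 if k ≡ 0 mod 3 and 2 otherwise. -/
lemma key (k : ℕ) (x : ℤ) (hk : 8 ≤ k) (hx : 1 ≤ x) :
    20 ≤ x ^ 2 * ((if k % 3 = 0 then (0 : ℤ) else 2) - 2 + (k * (k - 3) / 6 : ℕ)) -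
        2 * x * (1 + (k * (k - 3) / 6 : ℕ)) + 4 * (1 + (k * (k - 3) / 6 : ℕ)) := by
  set m : ℕ := k * (k - 3) / 6 with hmdef
  by_cases h3 : k % 3 = 0
  · have hk9 : 9 ≤ k := by omega
    have hm : 9 ≤ m := by
      have : 54 ≤ k * (k - 3) := Nat.mul_le_mul hk9 (show 6 ≤ k - 3 by omega)
      calc 9 = 54 / 6 := by norm_num
        _ ≤ m := Nat.div_le_div_right this
    have hm' : (9 : ℤ) ≤ (m : ℤ) := by exact_mod_cast hm
    simp only [h3, if_pos rfl, if_true]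
    nlinarith [sq_nonneg (x - 1), mul_nonneg (by linarith : (0:ℤ) ≤ (m:ℤ) - 9) (sq_nonneg (x-1)), mul_nonneg (by linarith : (0:ℤ) ≤ x - 1) (by linarith : (0:ℤ) ≤ x - 1)]
  · have hm : 6 ≤ m := by
      have : 40 ≤ k * (k - 3) := Nat.mul_le_mul hk (show 5 ≤ k - 3 by omega)
      calc 6 = 40 / 6 := by norm_num
        _ ≤ m := Nat.div_le_div_right this
    have hm' : (6 : ℤ) ≤ (m : ℤ) := by exact_mod_cast hm
    simp only [h3, if_neg h3, if_false]
    nlinarith [sq_nonneg (x - 1), mul_nonneg (by linarith : (0:ℤ) ≤ (m:ℤ) - 6) (sq_nonneg (x-1))]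

/-- For all integers `k ≥ 8` and `x ≥ 1`, the polynomial
`P_{B_k}(x) = x²(ε − 2 + ⌊k(k−3)/6⌋) − 2x(1 + ⌊k(k−3)/6⌋) + 4(1 + ⌊k(k−3)/6⌋)`
is strictly positive, with minimum value `20` attained at `k = 8`, `x = 1`, where
`ε = 0` if `k ≡ 0 (mod 3)` and `ε = 2` otherwise. -/
theorem boroczky_kummer_not_ball_quotient :
    (∀ k : ℕ, ∀ x : ℤ, 8 ≤ k → 1 ≤ x →
      0 < x ^ 2 * ((if k % 3 = 0 then (0 : ℤ) else 2) - 2 + (k * (k - 3) / 6 : ℕ)) -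
          2 * x * (1 + (k * (k - 3) / 6 : ℕ)) + 4 * (1 + (k * (k - 3) / 6 : ℕ))) ∧
    (∀ k : ℕ, ∀ x : ℤ, 8 ≤ k → 1 ≤ x →
      20 ≤ x ^ 2 * ((if k % 3 = 0 then (0 : ℤ) else 2) - 2 + (k * (k - 3) / 6 : ℕ)) -
          2 * x * (1 + (k * (k - 3) / 6 : ℕ)) + 4 * (1 + (k * (k - 3) / 6 : ℕ))) ∧
    ((1 : ℤ) ^ 2 * ((if (8 : ℕ) % 3 = 0 then (0 : ℤ) else 2) - 2 + ((8 * (8 - 3) / 6 : ℕ))) -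
        2 * 1 * (1 + ((8 * (8 - 3) / 6 : ℕ))) + 4 * (1 + ((8 * (8 - 3) / 6 : ℕ)))) = 20 := by
  refine ⟨fun k x hk hx => by linarith [key k x hk hx], key, by norm_num⟩
end

section
/- Let d ≥ 3 and let (k, (t_r)) be the data of a d-configuration satisfying the combinatorial equality d²(k²−k) = Σ(r²−r)t_r and the Hirzebruch-type inequality (7/2 d² − 9/2 d)k + t_2 + t_3 ≥ Σ_{r≥4}(r−4)t_r. If additionally 3 + 6dk − 5d²k + f_1 − 4f_0 ≥ 0 (with f_0 = Σ t_r, f_1 = Σ r t_r), then 2t_2 ≤ 6 + 3dk(1−d) < 0, a contradiction; hence 3 + 6dk − 5d²k + f_1 − 4f_0 < 0. -/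
/-- Let `d ≥ 3`, `k ≥ 4`, and let `(k, (t_r))` be the combinatorial
data of a `d`-configuration: `t_r ≥ 0`, the combinatorial equality
`d²(k²−k) = Σ_{r≥2}(r²−r)t_r` and the Hirzebruch-type inequality
`(7/2 d² − 9/2 d)k + t₂ + t₃ ≥ Σ_{r≥4}(r−4)t_r` hold. Then with
`f₀ = Σ t_r`, `f₁ = Σ r t_r` one has `3 + 6dk − 5d²k + f₁ − 4f₀ < 0`. -/
theorem d_configuration_key_inequality
    (d k : ℕ) (hd : 3 ≤ d) (hk : 4 ≤ k) (t : ℕ → ℕ)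
    (hcomb : (d : ℚ) ^ 2 * ((k : ℚ) ^ 2 - k) =
      ∑ r ∈ Finset.Icc 2 k, ((r : ℚ) ^ 2 - r) * t r)
    (hhirz : ((7 / 2) * (d : ℚ) ^ 2 - (9 / 2) * d) * k + t 2 + t 3 ≥
      ∑ r ∈ Finset.Icc 4 k, ((r : ℚ) - 4) * t r) :
    3 + 6 * (d : ℚ) * k - 5 * (d : ℚ) ^ 2 * k +
        (∑ r ∈ Finset.Icc 2 k, (r : ℚ) * t r) -
        4 * (∑ r ∈ Finset.Icc 2 k, (t r : ℚ)) < 0 := by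
  have hsplit : Finset.Icc 2 k = insert 2 (insert 3 (Finset.Icc 4 k)) := by
    ext x
    simp only [Finset.mem_insert, Finset.mem_Icc]
    omega
  have h2 : (2 : ℕ) ∉ insert 3 (Finset.Icc 4 k) := by
    simp only [Finset.mem_insert, Finset.mem_Icc]; omega
  have h3 : (3 : ℕ) ∉ Finset.Icc 4 k := by simp
  have hC : ∑ r ∈ Finset.Icc 4 k, ((r : ℚ) - 4) * t r =
      (∑ r ∈ Finset.Icc 4 k, (r : ℚ) * t r) -
      4 * (∑ r ∈ Finset.Icc 4 k, (t r : ℚ)) := by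
    rw [Finset.mul_sum, ← Finset.sum_sub_distrib]
    exact Finset.sum_congr rfl fun r _ => by ring
  rw [hsplit, Finset.sum_insert h2, Finset.sum_insert h3,
    Finset.sum_insert h2, Finset.sum_insert h3]
  have ht2 : (0 : ℚ) ≤ (t 2 : ℚ) := Nat.cast_nonneg _
  have hd' : (3 : ℚ) ≤ (d : ℚ) := by exact_mod_cast hd
  have hk' : (4 : ℚ) ≤ (k : ℚ) := by exact_mod_cast hk
  rw [hC] at hhirz
  push_cast
  nlinarith [mul_nonneg (sub_nonneg.2 hd') (sub_nonneg.2 hk'),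
    mul_nonneg (mul_nonneg (sub_nonneg.2 hd') (sub_nonneg.2 hk')) (sub_nonneg.2 hd')]
end
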